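/- The function x ↦ f_k(x)/T_k is a dual feasible function, i.e., for any finite sequence x_1,...,x_m in (0,1] with Σ x_i ≤ 1, we have Σ f_k(x_i)/T_k ≤ 1. -/

import Mathlib

/-- The sequence from the Harmonic algorithm: `t 1 = 1`, `t (i+1) = t i * (t i + 1)`. -/
def tSeq : ℕ → ℕ
  | 0 => 1
  | 1 => 1
  | (n + 2) => tSeq (n + 1) * (tSeq (n + 1) + 1)

/-- The harmonic weighting function `f_k`. -/
noncomputable def fHarm (k : ℕ) (x : ℝ) : ℝ :=
  if x ≤ 1 / k then k * x / ((k : ℝ) - 1) else 1 / (⌊1 / x⌋ : ℝ)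

/-- The harmonic constant `T_k`, where `m` satisfies `t_m < k ≤ t_{m+1}`. -/
noncomputable def TkVal (k m : ℕ) : ℝ :=
  (∑ i ∈ Finset.Icc 1 m, (1 : ℝ) / (tSeq i : ℝ)) +
    (1 / (tSeq (m + 1) : ℝ)) * ((k : ℝ) / ((k : ℝ) - 1))

noncomputable def phiH (k t : ℕ) : ℝ := 1/(t:ℝ) - ((k:ℝ)/((k:ℝ)-1)) / ((t:ℝ)+1)

noncomputable def PhiH (k s : ℕ) : ℝ :=
  if _h : 1 ≤ s ∧ s < k then phiH k s + PhiH k (s*(s+1)) else 0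
  termination_by k - s
  decreasing_by
    have : s + 1 ≤ s * (s+1) := Nat.le_mul_of_pos_left (s+1) _h.1
    omega

theorem PhiH_eq (k s : ℕ) :
    PhiH k s = if 1 ≤ s ∧ s < k then phiH k s + PhiH k (s*(s+1)) else 0 := by
  rw [PhiH]; split_ifs with h <;> simp [h]

theorem phiH_nonneg {k t : ℕ} (hk : 2 ≤ k) (ht1 : 1 ≤ t) (htk : t < k) :
    0 ≤ phiH k t := by
  have h1 : (1:ℝ) ≤ (t:ℝ) := by exact_mod_cast ht1
  have h2 : (t:ℝ) ≤ (k:ℝ) - 1 := by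
    have : (t:ℝ) + 1 ≤ (k:ℝ) := by exact_mod_cast htk
    linarith
  have hk2 : (2:ℝ) ≤ (k:ℝ) := by exact_mod_cast hk
  rw [phiH, sub_nonneg, div_le_div_iff₀ (by linarith) (by linarith)]
  rw [div_mul_eq_mul_div, div_le_iff₀ (by linarith)]
  nlinarith

theorem PhiH_nonneg_aux (k : ℕ) : ∀ n s, k - s ≤ n → 0 ≤ PhiH k s := by
  intro n
  induction n with
  | zero =>
    intro s h
    rw [PhiH_eq, if_neg (by omega)]
  | succ n ih =>
    intro s h
    rw [PhiH_eq]
    split_ifs with h1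
    · have hmul : s + 1 ≤ s * (s+1) := Nat.le_mul_of_pos_left (s+1) h1.1
      have hk2 : 2 ≤ k := by omega
      have := ih (s*(s+1)) (by omega)
      have := phiH_nonneg hk2 h1.1 h1.2
      linarith
    · exact le_refl 0

theorem PhiH_nonneg (k s : ℕ) : 0 ≤ PhiH k s := PhiH_nonneg_aux k (k-s) s le_rfl

/-- The key greedy/Sylvester bound. -/
theorem sumPhi_le {α : Type*} [DecidableEq α] (k : ℕ) (hk : 2 ≤ k) (t : α → ℕ)
    (B : Finset α) : ∀ (s : ℕ), 1 ≤ s →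
      (∀ i ∈ B, 1 ≤ t i ∧ t i < k) →
      (∑ i ∈ B, (1:ℝ)/((t i : ℝ) + 1)) < 1/(s:ℝ) →
      (∑ i ∈ B, phiH k (t i)) ≤ PhiH k s := by
  induction B using Finset.strongInduction with
  | _ B ih =>
    intro s hs hB hsum
    rcases B.eq_empty_or_nonempty with rfl | hne
    · simpa using PhiH_nonneg k s
    · obtain ⟨i0, hi0, hmin⟩ := B.exists_min_image t hne
      obtain ⟨ht1, htk⟩ := hB i0 hi0
      have hspos : (0:ℝ) < (s:ℝ) := by exact_mod_cast hs
      have ht0pos : (0:ℝ) < (t i0 : ℝ) := by exact_mod_cast ht1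
      have hterm_nonneg : ∀ i ∈ B, (0:ℝ) ≤ 1/((t i : ℝ)+1) := by
        intro i hi; positivity
      have hone : (1:ℝ)/((t i0:ℝ)+1) ≤ ∑ i ∈ B, (1:ℝ)/((t i : ℝ) + 1) :=
        Finset.single_le_sum hterm_nonneg hi0
      have hst0 : s ≤ t i0 := by
        by_contra hcon
        push_neg at hcon
        have h1 : (1:ℝ)/(s:ℝ) ≤ 1/((t i0:ℝ)+1) := by
          apply one_div_le_one_div_of_le (by positivity)
          have : t i0 + 1 ≤ s := by omega
          exact_mod_cast this
        linarith
      have hsk : s < k := lt_of_le_of_lt hst0 htk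
      have hPhis : PhiH k s = phiH k s + PhiH k (s*(s+1)) := by
        rw [PhiH_eq, if_pos ⟨hs, hsk⟩]
      rcases eq_or_lt_of_le hst0 with heq | hgt
      · -- min item equals s : recurse
        have hsub : B.erase i0 ⊂ B := Finset.erase_ssubset hi0
        have hsplit : ∑ i ∈ B, (1:ℝ)/((t i : ℝ) + 1)
            = 1/((t i0:ℝ)+1) + ∑ i ∈ B.erase i0, (1:ℝ)/((t i : ℝ) + 1) :=
          (Finset.add_sum_erase B _ hi0).symm
        have hsum' : ∑ i ∈ B.erase i0, (1:ℝ)/((t i : ℝ) + 1)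
            < 1/((s * (s + 1) : ℕ) : ℝ) := by
          have hcast : ((s * (s + 1) : ℕ) : ℝ) = (s:ℝ) * ((s:ℝ)+1) := by push_cast; ring
          have hts : (t i0 : ℝ) = (s:ℝ) := by exact_mod_cast heq.symm
          have hid : 1/(s:ℝ) - 1/((s:ℝ)+1) = 1/((s:ℝ) * ((s:ℝ)+1)) := by
            field_simp; ring
          rw [hcast]
          rw [hts] at hsplit
          linarith
        have hrec := ih (B.erase i0) hsub (s * (s + 1)) (by nlinarith)
          (fun i hi => hB i (Finset.mem_of_mem_erase hi)) hsum'
        calc ∑ i ∈ B, phiH k (t i)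
            = phiH k (t i0) + ∑ i ∈ B.erase i0, phiH k (t i) :=
              (Finset.add_sum_erase B _ hi0).symm
          _ ≤ phiH k (t i0) + PhiH k (s*(s+1)) := by linarith
          _ = PhiH k s := by rw [← heq]; exact hPhis.symm
      · -- all items ≥ s+1 : linear bound
        set c : ℝ := (k:ℝ)/((k:ℝ)-1) with hcdef
        have hk2 : (2:ℝ) ≤ (k:ℝ) := by exact_mod_cast hk
        have hc1 : 1 ≤ c := by
          rw [hcdef, le_div_iff₀ (by linarith)]; linarith
        set lam : ℝ := 1 + 1/((s:ℝ)+1) - c with hlamdef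
        have hitem : ∀ i ∈ B, phiH k (t i) ≤ lam * (1/((t i:ℝ)+1)) := by
          intro i hi
          obtain ⟨hi1, hik⟩ := hB i hi
          have hge : s + 1 ≤ t i := le_trans hgt (hmin i hi)
          have hgeR : (s:ℝ) + 1 ≤ (t i:ℝ) := by exact_mod_cast hge
          have htipos : (0:ℝ) < (t i:ℝ) := by exact_mod_cast hi1
          have hexp : phiH k (t i) = (1 + 1/(t i:ℝ) - c) * (1/((t i:ℝ)+1)) := by
            rw [phiH, ← hcdef]
            field_simp
          rw [hexp]
          apply mul_le_mul_of_nonneg_right _ (by positivity)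
          have : 1/(t i:ℝ) ≤ 1/((s:ℝ)+1) :=
            one_div_le_one_div_of_le (by positivity) hgeR
          rw [hlamdef]; linarith
        have hsum2 : ∑ i ∈ B, phiH k (t i) ≤ lam * ∑ i ∈ B, (1:ℝ)/((t i : ℝ) + 1) := by
          rw [Finset.mul_sum]
          exact Finset.sum_le_sum hitem
        rcases le_or_gt lam 0 with hlam | hlam
        · have : ∑ i ∈ B, phiH k (t i) ≤ 0 := by
            apply le_trans hsum2
            apply mul_nonpos_of_nonpos_of_nonneg hlam
            exact Finset.sum_nonneg hterm_nonneg
          linarith [PhiH_nonneg k s]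
        · have h3 : lam * ∑ i ∈ B, (1:ℝ)/((t i : ℝ) + 1) ≤ lam * (1/(s:ℝ)) :=
            mul_le_mul_of_nonneg_left (le_of_lt hsum) (le_of_lt hlam)
          have h4 : lam * (1/(s:ℝ)) ≤ phiH k s := by
            rw [phiH, ← hcdef, hlamdef]
            have h5 : (0:ℝ) < (s:ℝ)+1 := by linarith
            rw [div_sub_div _ _ (ne_of_gt hspos) (ne_of_gt h5)]
            rw [mul_one_div, div_le_div_iff₀ hspos (by positivity)]
            have h6 : (1/((s:ℝ)+1)) * ((s:ℝ)+1) = 1 := by field_simp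
            nlinarith
          calc ∑ i ∈ B, phiH k (t i) ≤ lam * (1/(s:ℝ)) := le_trans hsum2 h3
            _ ≤ phiH k s := h4
            _ ≤ PhiH k s := by linarith [PhiH_nonneg k (s*(s+1))]

theorem tSeq_pos : ∀ n, 1 ≤ tSeq n
  | 0 => le_refl 1
  | 1 => le_refl 1
  | (n+2) => by
    have h := tSeq_pos (n+1)
    show 1 ≤ tSeq (n+1) * (tSeq (n+1) + 1)
    exact Nat.one_le_iff_ne_zero.2 (Nat.mul_ne_zero (by omega) (by omega))

theorem tSeq_succ_eq (n : ℕ) (hn : 1 ≤ n) : tSeq (n+1) = tSeq n * (tSeq n + 1) := by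
  cases n with
  | zero => omega
  | succ j => rfl

theorem tSeq_mono : Monotone tSeq := by
  apply monotone_nat_of_le_succ
  intro n
  cases n with
  | zero => exact le_refl 1
  | succ j =>
    show tSeq (j+1) ≤ tSeq (j+1) * (tSeq (j+1) + 1)
    exact Nat.le_mul_of_pos_right _ (by have := tSeq_pos (j+1); omega)

theorem PhiH_tSeq (k m : ℕ) (hm1 : tSeq m < k) (hm2 : k ≤ tSeq (m+1)) :
    ∀ d j, 1 ≤ j → j + d = m + 1 →
      PhiH k (tSeq j) = ∑ i ∈ Finset.Icc j m, phiH k (tSeq i) := by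
  intro d
  induction d with
  | zero =>
    intro j hj hjd
    have hj' : j = m + 1 := by omega
    subst hj'
    rw [PhiH_eq, if_neg (by push_neg; intro _; omega), Finset.Icc_eq_empty (by omega),
      Finset.sum_empty]
  | succ d ihd =>
    intro j hj hjd
    have hjm : j ≤ m := by omega
    have h1 : tSeq j < k := lt_of_le_of_lt (tSeq_mono hjm) hm1
    rw [PhiH_eq, if_pos ⟨tSeq_pos j, h1⟩, ← tSeq_succ_eq j hj,
      ihd (j+1) (by omega) (by omega),
      Finset.Icc_eq_cons_Ioc hjm, Finset.sum_cons, ← Finset.Icc_add_one_left_eq_Ioc]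

theorem TkVal_eq (k : ℕ) (hk : 2 ≤ k) :
    ∀ m, TkVal k m = (∑ i ∈ Finset.Icc 1 m, phiH k (tSeq i)) + (k:ℝ)/((k:ℝ)-1) := by
  intro m
  induction m with
  | zero =>
    rw [TkVal]
    norm_num [tSeq]
  | succ m ihm =>
    have hpos : (0:ℝ) < (tSeq (m+1) : ℝ) := by exact_mod_cast tSeq_pos (m+1)
    have hrec : ((tSeq (m+2) : ℕ) : ℝ) = (tSeq (m+1):ℝ) * ((tSeq (m+1):ℝ) + 1) := by
      rw [tSeq_succ_eq (m+1) (by omega)]; push_cast; ring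
    rw [TkVal, Finset.sum_Icc_succ_top (by omega : 1 ≤ m + 1),
      Finset.sum_Icc_succ_top (by omega : 1 ≤ m + 1)]
    rw [TkVal] at ihm
    rw [phiH, hrec]
    have hk1 : ((k:ℝ) - 1) ≠ 0 := by
      have : (2:ℝ) ≤ (k:ℝ) := by exact_mod_cast hk
      linarith
    have key : (k:ℝ)/((k:ℝ)-1) * (1 / ((tSeq (m+1):ℝ) * ((tSeq (m+1):ℝ) + 1)))
        = 1/(tSeq (m+1):ℝ) * ((k:ℝ)/((k:ℝ)-1)) - (k:ℝ)/((k:ℝ)-1)/((tSeq (m+1):ℝ)+1) := by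
      field_simp
      ring
    linarith [ihm, key]

/-- `x ↦ f_k(x)/T_k` is a dual feasible function: it maps `[0,1]` to `[0,1]` and for any
finite sequence `x_1, …, x_m` in `(0,1]` with `Σ x_i ≤ 1` we have `Σ f_k(x_i)/T_k ≤ 1`. -/
theorem fHarm_div_Tk_dualFeasible (k m : ℕ) (hk : 2 ≤ k)
    (hm1 : tSeq m < k) (hm2 : k ≤ tSeq (m + 1)) :
    (∀ x ∈ Set.Icc (0 : ℝ) 1, fHarm k x / TkVal k m ∈ Set.Icc (0 : ℝ) 1) ∧
    (∀ (n : ℕ) (x : Fin n → ℝ), (∀ i, 0 < x i ∧ x i ≤ 1) → (∑ i, x i) ≤ 1 →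
      (∑ i, fHarm k (x i) / TkVal k m) ≤ 1) := by
  have hk2 : (2:ℝ) ≤ (k:ℝ) := by exact_mod_cast hk
  have hk1 : (0:ℝ) < (k:ℝ) - 1 := by linarith
  have hkpos : (0:ℝ) < (k:ℝ) := by linarith
  set c : ℝ := (k:ℝ)/((k:ℝ)-1) with hcdef
  have hc1 : 1 ≤ c := by rw [hcdef, le_div_iff₀ hk1]; linarith
  have hT : TkVal k m = PhiH k 1 + c := by
    rw [TkVal_eq k hk m]
    have h1 : PhiH k (tSeq 1) = ∑ i ∈ Finset.Icc 1 m, phiH k (tSeq i) :=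
      PhiH_tSeq k m hm1 hm2 m 1 le_rfl (by omega)
    have h2 : tSeq 1 = 1 := rfl
    rw [h2] at h1
    rw [h1]
  have hPhi0 : 0 ≤ PhiH k 1 := PhiH_nonneg k 1
  have hT1 : (1:ℝ) ≤ TkVal k m := by rw [hT]; linarith
  have hTpos : (0:ℝ) < TkVal k m := by linarith
  constructor
  · rintro x ⟨hx0, hx1⟩
    have hf0 : 0 ≤ fHarm k x ∧ fHarm k x ≤ 1 := by
      rw [fHarm]
      split_ifs with h
      · constructor
        · exact div_nonneg (mul_nonneg (by positivity) hx0) hk1.le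
        · rw [div_le_one hk1]
          have hkx : (k:ℝ) * x ≤ 1 := by
            calc (k:ℝ)*x ≤ (k:ℝ)*(1/(k:ℝ)) := mul_le_mul_of_nonneg_left h hkpos.le
            _ = 1 := by field_simp
          linarith
      · push_neg at h
        have hxpos : 0 < x := lt_trans (by positivity) h
        have hfl : (1:ℤ) ≤ ⌊1/x⌋ := by
          apply Int.le_floor.mpr
          rw [le_div_iff₀ hxpos]
          push_cast
          linarith
        have hflR : (1:ℝ) ≤ ((⌊1/x⌋:ℤ):ℝ) := by exact_mod_cast hfl
        constructor
        · apply div_nonneg (by norm_num) (by linarith)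
        · rw [div_le_one (by linarith)]; linarith
    exact ⟨div_nonneg hf0.1 hTpos.le, by rw [div_le_one hTpos]; linarith [hf0.2]⟩
  · intro n x hx hsum
    classical
    rw [← Finset.sum_div, div_le_one hTpos]
    set t : Fin n → ℕ := fun i => (⌊1/x i⌋).toNat with htdef
    set B : Finset (Fin n) := Finset.univ.filter (fun i => ¬ (x i ≤ 1/(k:ℝ))) with hBdef
    set A : Finset (Fin n) := Finset.univ.filter (fun i => (x i ≤ 1/(k:ℝ))) with hAdef
    have hBfacts : ∀ i ∈ B, (1 ≤ t i ∧ t i < k) ∧ 1/((t i:ℝ)+1) < x i ∧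
        fHarm k (x i) = 1/(t i:ℝ) := by
      intro i hi
      rw [hBdef, Finset.mem_filter] at hi
      have hxik : 1/(k:ℝ) < x i := not_le.mp hi.2
      have hxpos : 0 < x i := (hx i).1
      have hxle : x i ≤ 1 := (hx i).2
      have hfl : (1:ℤ) ≤ ⌊1/x i⌋ := by
        apply Int.le_floor.mpr
        rw [le_div_iff₀ hxpos]
        push_cast
        linarith
      have htvalZ : ((t i : ℕ) : ℤ) = ⌊1/x i⌋ := by
        rw [htdef]; exact Int.toNat_of_nonneg (by linarith)
      have htval : ((t i : ℕ) : ℝ) = ((⌊1/x i⌋:ℤ):ℝ) := by exact_mod_cast htvalZ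
      have ht1 : 1 ≤ t i := by
        have : (1:ℤ) ≤ ((t i : ℕ) : ℤ) := by rw [htvalZ]; exact hfl
        exact_mod_cast this
      have hup : (t i:ℝ) ≤ 1/x i := by rw [htval]; exact Int.floor_le _
      have hinvk : 1/x i < (k:ℝ) := by
        rw [div_lt_iff₀ hxpos]
        have : (k:ℝ) * (1/(k:ℝ)) < (k:ℝ) * x i := by
          apply mul_lt_mul_of_pos_left hxik hkpos
        rw [mul_one_div, div_self (ne_of_gt hkpos)] at this
        linarith
      have htk : t i < k := by
        have : (t i:ℝ) < (k:ℝ) := lt_of_le_of_lt hup hinvk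
        exact_mod_cast this
      have hlow : 1/x i < (t i:ℝ) + 1 := by rw [htval]; exact Int.lt_floor_add_one _
      have hterm : 1/((t i:ℝ)+1) < x i := by
        rw [div_lt_iff₀ hxpos] at hlow
        rw [div_lt_iff₀ (by positivity)]
        nlinarith
      have hfeq : fHarm k (x i) = 1/(t i:ℝ) := by
        rw [fHarm, if_neg hi.2, htval]
      exact ⟨⟨ht1, htk⟩, hterm, hfeq⟩
    have hsplit : ∑ i ∈ A, fHarm k (x i) + ∑ i ∈ B, fHarm k (x i)
        = ∑ i, fHarm k (x i) :=
      Finset.sum_filter_add_sum_filter_not Finset.univ _ _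
    have hxsplit : ∑ i ∈ A, x i + ∑ i ∈ B, x i = ∑ i, x i :=
      Finset.sum_filter_add_sum_filter_not Finset.univ _ _
    have hA : ∑ i ∈ A, fHarm k (x i) = c * ∑ i ∈ A, x i := by
      rw [Finset.mul_sum]
      apply Finset.sum_congr rfl
      intro i hi
      rw [hAdef, Finset.mem_filter] at hi
      rw [fHarm, if_pos hi.2, hcdef]
      ring
    have hB2 : ∑ i ∈ B, fHarm k (x i) ≤ ∑ i ∈ B, phiH k (t i) + c * ∑ i ∈ B, x i := by
      rw [Finset.mul_sum, ← Finset.sum_add_distrib]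
      apply Finset.sum_le_sum
      intro i hi
      obtain ⟨⟨ht1, htk⟩, hterm, hfeq⟩ := hBfacts i hi
      have htpos : (0:ℝ) < (t i:ℝ) := by exact_mod_cast ht1
      have hexp : fHarm k (x i) = phiH k (t i) + c * (1/((t i:ℝ)+1)) := by
        rw [hfeq, phiH, ← hcdef]
        ring
      rw [hexp]
      have : c * (1/((t i:ℝ)+1)) ≤ c * x i :=
        mul_le_mul_of_nonneg_left (le_of_lt hterm) (by linarith)
      linarith
    have hBphi : ∑ i ∈ B, phiH k (t i) ≤ PhiH k 1 := by
      rcases B.eq_empty_or_nonempty with hBe | hBne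
      · rw [hBe, Finset.sum_empty]; exact PhiH_nonneg k 1
      · apply sumPhi_le k hk t B 1 le_rfl (fun i hi => (hBfacts i hi).1)
        have h1 : ∑ i ∈ B, (1:ℝ)/((t i:ℝ)+1) < ∑ i ∈ B, x i :=
          Finset.sum_lt_sum_of_nonempty hBne (fun i hi => (hBfacts i hi).2.1)
        have h2 : ∑ i ∈ B, x i ≤ ∑ i, x i :=
          Finset.sum_le_sum_of_subset_of_nonneg (Finset.subset_univ B)
            (fun i _ _ => (hx i).1.le)
        have : ((1:ℕ):ℝ) = 1 := by norm_num
        rw [this, div_one]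
        linarith
    have hcx : c * (∑ i, x i) ≤ c * 1 := mul_le_mul_of_nonneg_left hsum (by linarith)
    have hfinal : ∑ i, fHarm k (x i) ≤ c + PhiH k 1 := by
      have : c * ∑ i ∈ A, x i + c * ∑ i ∈ B, x i = c * ∑ i, x i := by
        rw [← hxsplit]; ring
      linarith
    rw [hT]
    linarith
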